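/- Let G be a finite directed graph and let ~ be an equivalence relation on its vertices such that (1) u → v implies [u] → [v] in the quotient graph, and (2) if [u] → [v'] in the quotient and u is reachable from an initial vertex, then there exists v with [v] = [v'] and u → v. Then: if S is a bottom SCC of G (restricted to reachable vertices), then [S] is a bottom SCC of the quotient graph; and conversely, if S' is a bottom SCC of the quotient graph, then there exists a bottom SCC S of G with [S] = S'. -/

import Mathlib

open Set

variable {V W : Type*}

/-- `S` is a bottom strongly connected component of the graph with edge relation `E`:
nonempty, strongly connected, and closed under successors. -/
def IsBSCC (E : V → V → Prop) (S : Set V) : Prop :=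
  S.Nonempty ∧ (∀ u ∈ S, ∀ v ∈ S, Relation.ReflTransGen E u v) ∧
    ∀ u ∈ S, ∀ v, E u v → v ∈ S

/-- Reachability from a set `I` of initial vertices. -/
def ReachFrom (E : V → V → Prop) (I : Set V) (u : V) : Prop :=
  ∃ i ∈ I, Relation.ReflTransGen E i u

/-- correspondence of bottom SCCs under a quotient map.  `E` is the edge
relation of `G` on `V`, `H` the edge relation of the quotient graph on `W`, `c` the
quotient map and `I` the initial vertices.  Hypothesis (1): edges project to quotient edges;
hypothesis (2): quotient edges from (classes of) reachable vertices can be lifted.  Then the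
image of a bottom SCC of `G` consisting of reachable vertices is a bottom SCC of the
quotient graph, and every bottom SCC of the quotient graph consisting of reachable classes
is the image of a bottom SCC of `G`. -/
theorem bscc_quotient_correspondence [Finite V]
    (E : V → V → Prop) (H : W → W → Prop) (c : V → W) (I : Set V)
    (h1 : ∀ u v, E u v → H (c u) (c v))
    (h2 : ∀ u w, ReachFrom E I u → H (c u) w → ∃ v, c v = w ∧ E u v) :
    (∀ S : Set V, IsBSCC E S → S ⊆ {u | ReachFrom E I u} → IsBSCC H (c '' S)) ∧
    (∀ S' : Set W, IsBSCC H S' → S' ⊆ {w | ∃ i ∈ I, Relation.ReflTransGen H (c i) w} →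
      ∃ S : Set V, IsBSCC E S ∧ c '' S = S') := by
  have hmap : ∀ u v, Relation.ReflTransGen E u v → Relation.ReflTransGen H (c u) (c v) :=
    fun u v h => Relation.ReflTransGen.lift c (fun a b hab => h1 a b hab) u v h
  -- lifting paths in the quotient to paths in G, starting from a reachable vertex
  have hlift : ∀ u w, ReachFrom E I u → Relation.ReflTransGen H (c u) w →
      ∃ v, c v = w ∧ Relation.ReflTransGen E u v := by
    intro u w hu hw
    induction hw with
    | refl => exact ⟨u, rfl, Relation.ReflTransGen.refl⟩
    | tail _ hd ih =>
      obtain ⟨v, rfl, hv⟩ := ih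
      obtain ⟨i, hi, hiu⟩ := hu
      obtain ⟨v', hv', hev⟩ := h2 v _ ⟨i, hi, hiu.trans hv⟩ hd
      exact ⟨v', hv', hv.tail hev⟩
  have part1 : ∀ S : Set V, IsBSCC E S → S ⊆ {u | ReachFrom E I u} → IsBSCC H (c '' S) := by
    rintro S ⟨hne, hsc, hcl⟩ hreach
    refine ⟨hne.image c, ?_, ?_⟩
    · rintro _ ⟨u, hu, rfl⟩ _ ⟨v, hv, rfl⟩
      exact hmap u v (hsc u hu v hv)
    · rintro _ ⟨u, hu, rfl⟩ w hw
      obtain ⟨v, hv, hev⟩ := h2 u w (hreach hu) hw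
      exact ⟨v, hcl u hu v hev, hv⟩
  refine ⟨part1, ?_⟩
  rintro S' ⟨hne', hsc', hcl'⟩ hreach'
  obtain ⟨w0, hw0⟩ := hne'
  obtain ⟨i, hi, hiw0⟩ := hreach' hw0
  -- lift a path from c i to w0, getting a reachable vertex u0 with c u0 = w0
  obtain ⟨u0, hcu0, hu0⟩ := hlift i w0 ⟨i, hi, Relation.ReflTransGen.refl⟩ hiw0
  have hu0reach : ReachFrom E I u0 := ⟨i, hi, hu0⟩
  -- find a "minimal" vertex m reachable from u0
  set r : V → V → Prop := fun x y =>
    Relation.ReflTransGen E y x ∧ ¬ Relation.ReflTransGen E x y with hr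
  haveI : IsTrans V r := by
    constructor
    rintro a b c ⟨hba, hnab⟩ ⟨hcb, hnbc⟩
    exact ⟨hcb.trans hba, fun hac => hnab (hac.trans hcb)⟩
  haveI : IsIrrefl V r := ⟨fun a ⟨h, hn⟩ => hn h⟩
  have wf : WellFounded r := Finite.wellFounded_of_trans_of_irrefl r
  set T : Set V := {x | Relation.ReflTransGen E u0 x} with hT
  have hTne : T.Nonempty := ⟨u0, Relation.ReflTransGen.refl⟩
  set m : V := wf.min T hTne with hm
  have hmT : m ∈ T := wf.min_mem T hTne
  have hmin : ∀ x, Relation.ReflTransGen E m x → Relation.ReflTransGen E x m := by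
    intro x hx
    by_contra hnx
    exact wf.not_lt_min T (hmT.trans hx) ⟨hx, hnx⟩
  set S : Set V := {x | Relation.ReflTransGen E m x} with hS
  have hSbscc : IsBSCC E S := by
    refine ⟨⟨m, Relation.ReflTransGen.refl⟩, ?_, ?_⟩
    · intro u hu v hv
      exact (hmin u hu).trans hv
    · intro u hu v huv
      exact hu.tail huv
  have hmreach : ReachFrom E I m := ⟨i, hi, (hu0.trans hmT)⟩
  -- S' is closed under ReflTransGen H
  have hcl'' : ∀ u ∈ S', ∀ v, Relation.ReflTransGen H u v → v ∈ S' := by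
    intro u hu v hv
    induction hv with
    | refl => exact hu
    | tail _ hd ih => exact hcl' _ ih _ hd
  have hcmS' : c m ∈ S' := hcl'' w0 hw0 (c m) (hcu0 ▸ hmap u0 m hmT)
  refine ⟨S, hSbscc, Set.Subset.antisymm ?_ ?_⟩
  · rintro _ ⟨x, hx, rfl⟩
    exact hcl'' (c m) hcmS' (c x) (hmap m x hx)
  · intro w hw
    obtain ⟨v, hv, hmv⟩ := hlift m w hmreach (hsc' (c m) hcmS' w hw)
    exact ⟨v, hmv, hv⟩
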